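/- (Performance difference lemma, action-value form.) Let (S,A,P,r,γ) be a finite discounted MDP, π a policy, Q : S × A → ℝ arbitrary, Q^π a fixed point of F^π, and ρ : S × A → ℝ a probability distribution (ρ ≥ 0 and ∑_{(s,a)} ρ(s,a) = 1). Define the discounted visitation measure v^π_ρ(s,a) = (1−γ)·∑_{t=0}^∞ γ^t · ∑_{(s₀,a₀)} ρ(s₀,a₀) · ((P^π)^t)((s₀,a₀),(s,a)) (the series converges absolutely). Then ∑_{(s,a)} ρ(s,a)·(Q^π(s,a) − Q(s,a)) = (1/(1−γ)) · ∑_{(s,a)} v^π_ρ(s,a) · ((F^π Q)(s,a) − Q(s,a)). -/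

import Mathlib

/-- The state–action transition matrix `P^π` of a policy. -/
def saMatrix {S A : Type*} [Fintype S] [Fintype A]
    (P : S → A → S → ℝ) (pol : S → A → ℝ) : Matrix (S × A) (S × A) ℝ :=
  Matrix.of fun q q' => P q.1 q.2 q'.1 * pol q'.1 q'.2

/-- performance difference lemma, action-value form. -/
theorem performance_difference_action_value
    {S A : Type*} [Fintype S] [Fintype A] [Nonempty S] [Nonempty A]
    [DecidableEq S] [DecidableEq A]
    (P : S → A → S → ℝ) (hP0 : ∀ s a s', 0 ≤ P s a s')
    (hP1 : ∀ s a, ∑ s', P s a s' = 1)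
    (r : S → A → ℝ) (hr0 : ∀ s a, 0 ≤ r s a) (hr1 : ∀ s a, r s a ≤ 1)
    (γ : ℝ) (hγ0 : 0 ≤ γ) (hγ1 : γ < 1)
    (pol : S → A → ℝ) (hpol0 : ∀ s a, 0 ≤ pol s a) (hpol1 : ∀ s, ∑ a, pol s a = 1)
    (Q Qpi : S × A → ℝ)
    (hQpi : ∀ s a, r s a + γ * ∑ s', P s a s' * ∑ a', pol s' a' * Qpi (s', a')
      = Qpi (s, a))
    (ρ : S × A → ℝ) (hρ0 : ∀ p, 0 ≤ ρ p) (hρ1 : ∑ p, ρ p = 1) :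
    ∑ p, ρ p * (Qpi p - Q p)
      = (1 / (1 - γ)) *
        ∑ p : S × A,
          ((1 - γ) * ∑' t : ℕ, γ ^ t *
              ∑ p₀ : S × A, ρ p₀ * ((saMatrix P pol ^ t) p₀ p)) *
            ((r p.1 p.2 + γ * ∑ s', P p.1 p.2 s' * ∑ a', pol s' a' * Q (s', a'))
              - Q p) := by
  set M := saMatrix P pol with hMdef
  have hγ1' : (1 : ℝ) - γ ≠ 0 := by linarith
  -- entries of M
  have hM0 : ∀ q q' : S × A, 0 ≤ M q q' := fun q q' =>
    mul_nonneg (hP0 _ _ _) (hpol0 _ _)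
  -- M *ᵥ f in MDP form
  have hmv : ∀ (f : S × A → ℝ) (p : S × A),
      ∑ q', M p q' * f q' = ∑ s', P p.1 p.2 s' * ∑ a', pol s' a' * f (s', a') := by
    intro f p
    rw [Fintype.sum_prod_type]
    simp only [hMdef, saMatrix, Matrix.of_apply]
    congr 1; ext s'
    rw [Finset.mul_sum]
    congr 1; ext a'
    ring
  have hMrow : ∀ q : S × A, ∑ q', M q q' = 1 := by
    intro q
    have h := hmv (fun _ => 1) q
    simp only [mul_one] at h
    rw [h]
    simp only [hpol1, mul_one, hP1]
  -- powers
  have hMt0 : ∀ (t : ℕ) (q q' : S × A), 0 ≤ (M ^ t) q q' := by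
    intro t
    induction t with
    | zero => intro q q'; simp [Matrix.one_apply]; split <;> norm_num
    | succ n ih =>
      intro q q'
      rw [pow_succ, Matrix.mul_apply]
      exact Finset.sum_nonneg fun k _ => mul_nonneg (ih q k) (hM0 k q')
  have hMtrow : ∀ (t : ℕ) (q : S × A), ∑ q', (M ^ t) q q' = 1 := by
    intro t
    induction t with
    | zero => intro q; simp [Matrix.one_apply]
    | succ n ih =>
      intro q
      simp only [pow_succ, Matrix.mul_apply]
      rw [Finset.sum_comm]
      calc ∑ k, ∑ q', (M ^ n) q k * M k q'
          = ∑ k, (M ^ n) q k * ∑ q', M k q' := by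
            congr 1; ext k; rw [Finset.mul_sum]
        _ = 1 := by simp only [hMrow, mul_one]; exact ih q
  -- bound lemma
  have hbound : ∀ (f : S × A → ℝ) (C : ℝ), (∀ p, |f p| ≤ C) →
      ∀ (t : ℕ) (p : S × A), |∑ q', (M ^ t) p q' * f q'| ≤ C := by
    intro f C hC t p
    calc |∑ q', (M ^ t) p q' * f q'| ≤ ∑ q', |(M ^ t) p q' * f q'| :=
          Finset.abs_sum_le_sum_abs _ _
      _ ≤ ∑ q', (M ^ t) p q' * C := by
          apply Finset.sum_le_sum
          intro q' _
          rw [abs_mul, abs_of_nonneg (hMt0 t p q')]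
          exact mul_le_mul_of_nonneg_left (hC q') (hMt0 t p q')
      _ = C := by rw [← Finset.sum_mul, hMtrow, one_mul]
  -- g and D
  set g : S × A → ℝ := fun p => r p.1 p.2 + γ * ∑ q', M p q' * Q q' - Q p with hgdef
  set D : S × A → ℝ := fun p => Qpi p - Q p with hDdef
  obtain ⟨Cg, hCg⟩ : ∃ C, ∀ p, |g p| ≤ C :=
    ⟨Finset.univ.sup' Finset.univ_nonempty fun p => |g p|,
      fun p => Finset.le_sup' (fun p => |g p|) (Finset.mem_univ p)⟩
  obtain ⟨CD, hCD⟩ : ∃ C, ∀ p, |D p| ≤ C :=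
    ⟨Finset.univ.sup' Finset.univ_nonempty fun p => |D p|,
      fun p => Finset.le_sup' (fun p => |D p|) (Finset.mem_univ p)⟩
  have hCg0 : 0 ≤ Cg := le_trans (abs_nonneg _) (hCg (Classical.arbitrary _))
  -- recursion
  have hrec : ∀ p : S × A, D p = g p + γ * ∑ q', M p q' * D q' := by
    intro p
    have h1 : ∑ q', M p q' * D q' =
        (∑ q', M p q' * Qpi q') - ∑ q', M p q' * Q q' := by
      rw [← Finset.sum_sub_distrib]
      congr 1; ext q'; simp only [hDdef]; ring
    have h2 : Qpi p = r p.1 p.2 + γ * ∑ q', M p q' * Qpi q' := by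
      rw [hmv Qpi p, hQpi p.1 p.2]
    simp only [hDdef, hgdef, h1]
    rw [h2]
    simp only [mul_sub, Finset.sum_sub_distrib]
    ring
  -- telescoping
  have hT : ∀ (n : ℕ) (p : S × A),
      D p = (∑ t ∈ Finset.range n, γ ^ t * ∑ q', (M ^ t) p q' * g q')
        + γ ^ n * ∑ q', (M ^ n) p q' * D q' := by
    intro n
    induction n with
    | zero => intro p; simp [Matrix.one_apply]
    | succ n ih =>
      intro p
      rw [Finset.sum_range_succ]
      have key : ∑ q', (M ^ n) p q' * D q' =
          (∑ q', (M ^ n) p q' * g q') + γ * ∑ q', (M ^ (n+1)) p q' * D q' := by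
        calc ∑ q', (M ^ n) p q' * D q'
            = ∑ q', (M ^ n) p q' * (g q' + γ * ∑ k, M q' k * D k) := by
              congr 1; ext q'; rw [← hrec q']
          _ = (∑ q', (M ^ n) p q' * g q')
              + γ * ∑ q', ∑ k, (M ^ n) p q' * (M q' k * D k) := by
              have hpt : ∀ q' : S × A,
                  (M ^ n) p q' * (g q' + γ * ∑ k, M q' k * D k)
                  = (M ^ n) p q' * g q'
                    + γ * ∑ k, (M ^ n) p q' * (M q' k * D k) := by
                intro q'
                rw [mul_add]
                congr 1
                rw [mul_left_comm, Finset.mul_sum]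
              simp only [hpt]
              rw [Finset.sum_add_distrib, ← Finset.mul_sum]
          _ = (∑ q', (M ^ n) p q' * g q') + γ * ∑ k, (M ^ (n+1)) p k * D k := by
              congr 1
              rw [Finset.sum_comm]
              congr 1
              refine Finset.sum_congr rfl fun k _ => ?_
              rw [pow_succ, Matrix.mul_apply, Finset.sum_mul]
              refine Finset.sum_congr rfl fun q' _ => ?_
              ring
      rw [ih p, key]
      ring
  -- summability of the series for D
  have hsumm : ∀ p : S × A,
      Summable (fun t : ℕ => γ ^ t * ∑ q', (M ^ t) p q' * g q') := by
    intro p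
    apply Summable.of_norm_bounded (g := fun t => Cg * γ ^ t)
      ((summable_geometric_of_lt_one hγ0 hγ1).mul_left Cg)
    intro t
    rw [Real.norm_eq_abs, abs_mul, abs_pow, abs_of_nonneg hγ0]
    rw [mul_comm Cg]
    exact mul_le_mul_of_nonneg_left (hbound g Cg hCg t p) (pow_nonneg hγ0 t)
  -- D as a tsum
  have hDt : ∀ p : S × A,
      D p = ∑' t : ℕ, γ ^ t * ∑ q', (M ^ t) p q' * g q' := by
    intro p
    symm
    apply HasSum.tsum_eq
    rw [(hsumm p).hasSum_iff_tendsto_nat]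
    have heq : ∀ n : ℕ, ∑ t ∈ Finset.range n, γ ^ t * ∑ q', (M ^ t) p q' * g q'
        = D p - γ ^ n * ∑ q', (M ^ n) p q' * D q' := by
      intro n; rw [hT n p]; ring
    simp only [heq]
    have h0 : Filter.Tendsto (fun n : ℕ => γ ^ n * ∑ q', (M ^ n) p q' * D q')
        Filter.atTop (nhds 0) := by
      apply squeeze_zero_norm (a := fun n => CD * γ ^ n)
      · intro n
        rw [Real.norm_eq_abs, abs_mul, abs_pow, abs_of_nonneg hγ0, mul_comm CD]
        exact mul_le_mul_of_nonneg_left (hbound D CD hCD n p) (pow_nonneg hγ0 n)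
      · have := tendsto_pow_atTop_nhds_zero_of_lt_one hγ0 hγ1
        simpa using this.const_mul CD
    have := Filter.Tendsto.sub (tendsto_const_nhds (x := D p)) h0
    simpa using this
  -- summability for RHS version
  have hsumm2 : ∀ p : S × A,
      Summable (fun t : ℕ => γ ^ t * ∑ p₀, ρ p₀ * (M ^ t) p₀ p) := by
    intro p
    apply Summable.of_norm_bounded (g := fun t => 1 * γ ^ t)
      ((summable_geometric_of_lt_one hγ0 hγ1).mul_left 1)
    intro t
    rw [Real.norm_eq_abs, abs_mul, abs_pow, abs_of_nonneg hγ0, mul_comm (1:ℝ)]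
    apply mul_le_mul_of_nonneg_left _ (pow_nonneg hγ0 t)
    calc |∑ p₀, ρ p₀ * (M ^ t) p₀ p| ≤ ∑ p₀, |ρ p₀ * (M ^ t) p₀ p| :=
          Finset.abs_sum_le_sum_abs _ _
      _ ≤ ∑ p₀, ρ p₀ * 1 := by
          apply Finset.sum_le_sum
          intro p₀ _
          rw [abs_mul, abs_of_nonneg (hρ0 p₀), abs_of_nonneg (hMt0 t p₀ p)]
          apply mul_le_mul_of_nonneg_left _ (hρ0 p₀)
          calc (M ^ t) p₀ p ≤ ∑ q', (M ^ t) p₀ q' :=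
                Finset.single_le_sum (fun q' _ => hMt0 t p₀ q') (Finset.mem_univ p)
            _ = 1 := hMtrow t p₀
      _ = 1 := by simp [hρ1]
  -- the g in the statement equals our g
  have hgeq : ∀ p : S × A,
      (r p.1 p.2 + γ * ∑ s', P p.1 p.2 s' * ∑ a', pol s' a' * Q (s', a')) - Q p
        = g p := by
    intro p
    simp only [hgdef]
    rw [hmv Q p]
  -- both sides equal the common value
  have key : ∑ p, ρ p * D p
      = ∑' t : ℕ, γ ^ t * ∑ p₀, ρ p₀ * ∑ q', (M ^ t) p₀ q' * g q' := by
    calc ∑ p, ρ p * D p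
        = ∑ p, ∑' t : ℕ, ρ p * (γ ^ t * ∑ q', (M ^ t) p q' * g q') := by
          congr 1; ext p
          rw [hDt p, ← tsum_mul_left]
      _ = ∑' t : ℕ, ∑ p, ρ p * (γ ^ t * ∑ q', (M ^ t) p q' * g q') := by
          rw [Summable.tsum_finsetSum]
          intro p _
          exact (hsumm p).mul_left (ρ p)
      _ = ∑' t : ℕ, γ ^ t * ∑ p₀, ρ p₀ * ∑ q', (M ^ t) p₀ q' * g q' := by
          refine tsum_congr fun t => ?_
          rw [Finset.mul_sum]
          refine Finset.sum_congr rfl fun p _ => ?_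
          ring
  calc ∑ p, ρ p * (Qpi p - Q p) = ∑ p, ρ p * D p := rfl
    _ = ∑' t : ℕ, γ ^ t * ∑ p₀, ρ p₀ * ∑ q', (M ^ t) p₀ q' * g q' := key
    _ = (1 / (1 - γ)) *
        ∑ p : S × A,
          ((1 - γ) * ∑' t : ℕ, γ ^ t * ∑ p₀ : S × A, ρ p₀ * ((M ^ t) p₀ p)) *
            ((r p.1 p.2 + γ * ∑ s', P p.1 p.2 s' * ∑ a', pol s' a' * Q (s', a'))
              - Q p) := by
        have hstep : ∀ p : S × A,
            ((1 - γ) * ∑' t : ℕ, γ ^ t * ∑ p₀ : S × A, ρ p₀ * ((M ^ t) p₀ p)) *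
              ((r p.1 p.2 + γ * ∑ s', P p.1 p.2 s' * ∑ a', pol s' a' * Q (s', a'))
                - Q p)
            = (1 - γ) * ∑' t : ℕ,
                (γ ^ t * ∑ p₀ : S × A, ρ p₀ * (M ^ t) p₀ p) * g p := by
          intro p
          rw [hgeq p, mul_assoc, ← tsum_mul_right]
        simp only [hstep]
        rw [← Finset.mul_sum, ← mul_assoc, one_div, inv_mul_cancel₀ hγ1', one_mul]
        rw [← Summable.tsum_finsetSum (fun (p : S × A) (_ : p ∈ Finset.univ) => ((hsumm2 p).mul_right (g p)))]
        refine tsum_congr fun t => ?_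
        simp only [Finset.mul_sum, Finset.sum_mul]
        rw [Finset.sum_comm]
        exact Finset.sum_congr rfl fun p _ => Finset.sum_congr rfl fun p₀ _ => by ring
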